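/- Let r ≥ 2 and n ≥ 2. In S_{2rn}, for 1 ≤ j ≤ n let A_j be the 2r-cycle (2r(j-1)+1, …, 2rj) and for 1 ≤ i ≤ n-1 let B_i = ∏_{m=1}^{2r}(2r(i-1)+m, 2ri+m). Let B be an element of the subgroup generated by B_1,…,B_{n-1} with induced block permutation β ∈ S_n (B sends 2r(j-1)+m to 2r(β(j)-1)+m), let J be the support of β, and let the cycles of β on J be τ_1,…,τ_K with supports J_1,…,J_K and lengths |τ_1|,…,|τ_K|. Let d_j (j ∈ J) be integers and let N denote the order of β (equivalently, the order of B). Then for every integer h, ((∏_{j∈J} A_j^{d_j})·B)^{hN} = ∏_{k=1}^{K} (∏_{j∈J_k} A_j)^{h·(N/|τ_k|)·∑_{j∈J_k} d_j}. -/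

import Mathlib

open Equiv Equiv.Perm Finset

section Stmt17Aux

variable {G : Type*} [Group G] {n : ℕ}

private def s17fprod (a : Fin n → G) (hc : ∀ i j : Fin n, Commute (a i) (a j))
    (v : Fin n → ℤ) : G :=
  Finset.univ.noncommProd (fun j => a j ^ v j) fun i _ j _ _ => (hc i j).zpow_zpow _ _

private lemma s17fprod_add (a : Fin n → G) (hc : ∀ i j : Fin n, Commute (a i) (a j))
    (v w : Fin n → ℤ) : s17fprod a hc (v + w) = s17fprod a hc v * s17fprod a hc w := by
  unfold s17fprod
  rw [← Finset.noncommProd_mul_distrib _ _ (fun i _ j _ _ => (hc i j).zpow_zpow _ _)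
      (fun i _ j _ _ => (hc i j).zpow_zpow _ _) (fun i _ j _ _ => (hc i j).zpow_zpow _ _)]
  exact Finset.noncommProd_congr rfl (fun j _ => by simp [zpow_add]) _

private lemma s17fprod_zero (a : Fin n → G) (hc : ∀ i j : Fin n, Commute (a i) (a j)) :
    s17fprod a hc 0 = 1 := by
  have := s17fprod_add a hc 0 0
  simpa using this.symm

private def s17fhom (a : Fin n → G) (hc : ∀ i j : Fin n, Commute (a i) (a j)) :
    Multiplicative (Fin n → ℤ) →* G :=
  MonoidHom.mk' (fun v => s17fprod a hc v.toAdd) (fun v w => s17fprod_add a hc v.toAdd w.toAdd)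

private lemma s17fprod_zpow (a : Fin n → G) (hc : ∀ i j : Fin n, Commute (a i) (a j))
    (v : Fin n → ℤ) (h : ℤ) : s17fprod a hc v ^ h = s17fprod a hc (h • v) := by
  have h1 := map_zpow (s17fhom a hc) (Multiplicative.ofAdd v) h
  have h2 : (Multiplicative.ofAdd v ^ h).toAdd = h • v := by
    rw [toAdd_zpow]; rfl
  simp only [s17fhom, MonoidHom.mk'_apply, h2] at h1
  exact h1.symm

private lemma s17ncp_congr {M : Type*} [Monoid M] {s t : Multiset M} (h : s = t)
    (c1 : { x | x ∈ s }.Pairwise Commute) (c2 : { x | x ∈ t }.Pairwise Commute) :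
    s.noncommProd c1 = t.noncommProd c2 := by subst h; rfl

private lemma s17fprod_reindex (a : Fin n → G) (hc : ∀ i j : Fin n, Commute (a i) (a j))
    (σ : Equiv.Perm (Fin n)) (v : Fin n → ℤ) :
    s17fprod (fun j => a (σ j)) (fun i j => hc (σ i) (σ j)) v
      = s17fprod a hc (fun j => v (σ⁻¹ j)) := by
  unfold s17fprod Finset.noncommProd
  apply s17ncp_congr
  have h1 : (fun j : Fin n => a (σ j) ^ v j)
      = (fun j : Fin n => a j ^ v (σ⁻¹ j)) ∘ σ := by
    funext j; simp
  show Multiset.map (fun j => a (σ j) ^ v j) Finset.univ.val = _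
  rw [h1, ← Multiset.map_map]
  congr 1
  have := congr_arg Finset.val (Finset.map_univ_equiv σ)
  simpa [Finset.map_val] using this

private lemma s17fprod_conj (a : Fin n → G) (hc : ∀ i j : Fin n, Commute (a i) (a j)) (b : G)
    (σ : Equiv.Perm (Fin n)) (hb : ∀ j, b * a j = a (σ j) * b) (v : Fin n → ℤ) :
    b * s17fprod a hc v = s17fprod a hc (fun j => v (σ⁻¹ j)) * b := by
  have h1 : (MulAut.conj b) (s17fprod a hc v)
      = s17fprod (fun j => a (σ j)) (fun i j => hc (σ i) (σ j)) v := by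
    unfold s17fprod
    refine (Finset.map_noncommProd _ _ _ _).trans ?_
    refine Finset.noncommProd_congr rfl (fun j _ => ?_) _
    rw [map_zpow]
    congr 1
    show b * a j * b⁻¹ = a (σ j)
    rw [hb j, mul_inv_cancel_right]
  have h2 : b * s17fprod a hc v * b⁻¹ = s17fprod a hc (fun j => v (σ⁻¹ j)) := by
    rw [← s17fprod_reindex a hc σ v, ← h1]
    rfl
  calc b * s17fprod a hc v = (b * s17fprod a hc v * b⁻¹) * b := by group
    _ = s17fprod a hc (fun j => v (σ⁻¹ j)) * b := by rw [h2]

private lemma s17conj_pow (a : Fin n → G) (b : G) (σ : Equiv.Perm (Fin n))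
    (hb : ∀ j, b * a j = a (σ j) * b) (k : ℕ) :
    ∀ j, b ^ k * a j = a ((σ ^ k) j) * b ^ k := by
  induction k with
  | zero => intro j; simp
  | succ k ih =>
    intro j
    calc b ^ (k + 1) * a j = b ^ k * (b * a j) := by rw [pow_succ]; group
      _ = b ^ k * a (σ j) * b := by rw [hb j]; group
      _ = a ((σ ^ k) (σ j)) * b ^ k * b := by rw [ih (σ j)]
      _ = a ((σ ^ (k + 1)) j) * b ^ (k + 1) := by
          rw [pow_succ σ k, Equiv.Perm.mul_apply, pow_succ]; group

private lemma s17main_pow (a : Fin n → G) (hc : ∀ i j : Fin n, Commute (a i) (a j)) (b : G)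
    (σ : Equiv.Perm (Fin n)) (hb : ∀ j, b * a j = a (σ j) * b) (u : Fin n → ℤ) (k : ℕ) :
    (s17fprod a hc u * b) ^ k
      = s17fprod a hc (fun j => ∑ t ∈ Finset.range k, u ((σ ^ t)⁻¹ j)) * b ^ k := by
  induction k with
  | zero =>
    simp only [pow_zero, Finset.range_zero, Finset.sum_empty, mul_one]
    rw [show (fun _ : Fin n => (0:ℤ)) = (0 : Fin n → ℤ) from rfl, s17fprod_zero]
  | succ k ih =>
    have hck := s17fprod_conj a hc (b ^ k) (σ ^ k) (s17conj_pow a b σ hb k) u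
    rw [pow_succ, ih]
    calc (s17fprod a hc fun j => ∑ t ∈ Finset.range k, u ((σ ^ t)⁻¹ j)) * b ^ k
          * (s17fprod a hc u * b)
        = (s17fprod a hc fun j => ∑ t ∈ Finset.range k, u ((σ ^ t)⁻¹ j))
            * (b ^ k * s17fprod a hc u) * b := by group
      _ = (s17fprod a hc fun j => ∑ t ∈ Finset.range k, u ((σ ^ t)⁻¹ j))
            * (s17fprod a hc (fun j => u ((σ ^ k)⁻¹ j)) * b ^ k) * b := by rw [hck]
      _ = ((s17fprod a hc fun j => ∑ t ∈ Finset.range k, u ((σ ^ t)⁻¹ j))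
            * s17fprod a hc (fun j => u ((σ ^ k)⁻¹ j))) * b ^ (k + 1) := by
          rw [pow_succ]; group
      _ = s17fprod a hc (fun j => ∑ t ∈ Finset.range (k + 1), u ((σ ^ t)⁻¹ j)) * b ^ (k + 1) := by
          rw [← s17fprod_add]
          have hfun : ((fun j => ∑ t ∈ Finset.range k, u ((σ ^ t)⁻¹ j)) + fun j => u ((σ ^ k)⁻¹ j))
              = fun j => ∑ t ∈ Finset.range (k + 1), u ((σ ^ t)⁻¹ j) := by
            funext j
            simp [Finset.sum_range_succ]
          rw [hfun]

private lemma s17block_sum (σ : Equiv.Perm (Fin n)) (g : Fin n → ℤ) (j : Fin n) (c : ℕ)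
    (hfix : (σ ^ c) j = j) :
    ∀ q : ℕ, ∑ t ∈ Finset.range (c * q), g ((σ ^ t) j)
      = (q : ℤ) * ∑ t ∈ Finset.range c, g ((σ ^ t) j) := by
  have hfixm : ∀ i : ℕ, (σ ^ (c * i)) j = j := by
    intro i
    rw [pow_mul]
    induction i with
    | zero => rfl
    | succ i ih => rw [pow_succ, Equiv.Perm.mul_apply, hfix, ih]
  intro q
  induction q with
  | zero => simp
  | succ q ihq =>
    rw [Nat.mul_succ, Finset.sum_range_add, ihq]
    have hch : ∀ i ∈ Finset.range c, g ((σ ^ (c * q + i)) j) = g ((σ ^ i) j) := by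
      intro i _
      congr 1
      rw [add_comm, pow_add, Equiv.Perm.mul_apply, hfixm]
    rw [Finset.sum_congr rfl hch]
    push_cast
    ring

private lemma s17key_sum (σ : Equiv.Perm (Fin n)) (g : Fin n → ℤ) (j : Fin n)
    (s : Finset (Fin n)) (hcy : σ.IsCycleOn (s : Set (Fin n))) (hjs : j ∈ s)
    {N : ℕ} (hσ : σ ^ N = 1) :
    ∑ t ∈ Finset.range N, g ((σ ^ t) j)
      = ((N / s.card : ℕ) : ℤ) * ∑ j' ∈ s, g j' := by
  classical
  have hcard : 0 < s.card := Finset.card_pos.2 ⟨j, hjs⟩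
  have hdvd : s.card ∣ N := (hcy.pow_apply_eq hjs).1 (by rw [hσ]; rfl)
  obtain ⟨q, hq⟩ := hdvd
  have hmem : ∀ t : ℕ, (σ ^ t) j ∈ s := by
    intro t
    induction t with
    | zero => exact hjs
    | succ t ih =>
      rw [pow_succ', Equiv.Perm.mul_apply]
      exact hcy.1.mapsTo ih
  have hbij : ∑ t ∈ Finset.range s.card, g ((σ ^ t) j) = ∑ j' ∈ s, g j' := by
    apply Finset.sum_nbij (fun t => (σ ^ t) j)
    · intro t _
      exact hmem t
    · intro t1 ht1 t2 ht2 hteq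
      simp only [Finset.coe_range, Set.mem_Iio] at ht1 ht2
      have := (hcy.pow_apply_eq_pow_apply hjs).1 hteq
      rwa [Nat.ModEq, Nat.mod_eq_of_lt ht1, Nat.mod_eq_of_lt ht2] at this
    · intro b hb
      simp only [Finset.coe_range, Set.mem_Iio, Set.mem_image] at hb ⊢
      obtain ⟨t, ht, hteq⟩ := hcy.exists_pow_eq hjs hb
      exact ⟨t, ht, hteq⟩
    · intro t _; rfl
  have hqN : N / s.card = q := by rw [hq, Nat.mul_div_cancel_left _ hcard]
  rw [hqN, hq, s17block_sum σ g j s.card (hcy.pow_card_apply hjs) q, hbij]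

private lemma s17list_fprod (a : Fin n → G) (hc : ∀ i j : Fin n, Commute (a i) (a j))
    (s : Finset (Fin n)) (v : Fin n → ℤ) (hv : ∀ j ∉ s, v j = 0) :
    ((s.sort (· ≤ ·)).map fun j => a j ^ v j).prod = s17fprod a hc v := by
  classical
  have h1 : s17fprod a hc v
      = s.noncommProd (fun j => a j ^ v j) (fun i _ j _ _ => (hc i j).zpow_zpow _ _) := by
    unfold s17fprod
    have e1 : Finset.univ.noncommProd (fun j => a j ^ v j)
        (fun i _ j _ _ => (hc i j).zpow_zpow _ _)
        = (s ∪ sᶜ).noncommProd (fun j => a j ^ v j)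
        (fun i _ j _ _ => (hc i j).zpow_zpow _ _) :=
      Finset.noncommProd_congr (Finset.union_compl s).symm (fun _ _ => rfl) _
    rw [e1]; refine (Finset.noncommProd_union_of_disjoint disjoint_compl_right _ _).trans ?_
    have h2 : Finset.noncommProd sᶜ (fun j => a j ^ v j)
        (fun i _ j _ _ => (hc i j).zpow_zpow _ _) = 1 := by
      refine (Finset.noncommProd_eq_pow_card _ (fun j => a j ^ v j) _ 1
        (fun x hx => by rw [hv x (Finset.mem_compl.1 hx), zpow_zero])).trans ?_
      exact one_pow _
    rw [h2, mul_one]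
  rw [h1]
  unfold Finset.noncommProd
  rw [← Multiset.noncommProd_coe ((s.sort (· ≤ ·)).map fun j => a j ^ v j)
    (by
      intro x hx y hy
      simp only [Multiset.mem_coe, List.mem_map] at hx hy
      obtain ⟨i, _, rfl⟩ := hx
      obtain ⟨j', _, rfl⟩ := hy
      intro _
      exact (hc i j').zpow_zpow _ _)]
  apply s17ncp_congr
  rw [← Multiset.map_coe, Finset.sort_eq]

end Stmt17Aux
/-- Let `r ≥ 2`, `n ≥ 2`.  In `S_{2rn}` (on `Fin (2*r*n)`,
`0`-indexed), for `0 ≤ j < n` let `A j` be the `2r`-cycle on the `j`-th block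
`𝔸_j = {2rj, …, 2rj + 2r - 1}` and for `0 ≤ i < n-1` let `B i` swap blocks `i` and
`i+1` position-by-position.  Let `B₀` be in the subgroup generated by the `B i`'s,
with induced block permutation `β ∈ S_n` (so `B₀` sends `2r·j + m` to `2r·β(j) + m`),
let `J` be the support of `β`, let the cycles of `β` have supports `J_k` and lengths
`|τ_k|`, let `d_j` be integers, and let `N` be the order of `β`.  Then for every
integer `h`,
`((∏_{j∈J} A_j^{d_j}) · B₀)^{hN} = ∏_k (∏_{j∈J_k} A_j)^{h·(N/|τ_k|)·∑_{j∈J_k} d_j}`;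
since the `A_j` pairwise commute, the right-hand side is written below as the product
over `j ∈ J` of `A_j` raised to `h·(N/|τ_{k(j)}|)·∑_{j'∈J_{k(j)}} d_{j'}`, where
`τ_{k(j)}` is the cycle of `β` containing `j` (its support is that of `β.cycleOf j`). -/
theorem stmt17 (r n : ℕ) (hr : 2 ≤ r) (hn : 2 ≤ n)
    (A : ℕ → Equiv.Perm (Fin (2 * r * n)))
    (hA : ∀ j < n, ∀ x : Fin (2 * r * n),
      ((A j x : ℕ)) = if (x : ℕ) / (2 * r) = j
        then 2 * r * j + ((x : ℕ) % (2 * r) + 1) % (2 * r) else (x : ℕ))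
    (B : ℕ → Equiv.Perm (Fin (2 * r * n)))
    (hB : ∀ i, i + 1 < n → ∀ x : Fin (2 * r * n),
      ((B i x : ℕ)) = if (x : ℕ) / (2 * r) = i then (x : ℕ) + 2 * r
        else if (x : ℕ) / (2 * r) = i + 1 then (x : ℕ) - 2 * r else (x : ℕ))
    (B₀ : Equiv.Perm (Fin (2 * r * n)))
    (hB₀ : B₀ ∈ Subgroup.closure (B '' {i | i + 1 < n}))
    (β : Equiv.Perm (Fin n))
    (hβ : ∀ (x : Fin (2 * r * n)) (j : Fin n), (x : ℕ) / (2 * r) = (j : ℕ) →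
      ((B₀ x : ℕ)) = 2 * r * ((β j : ℕ)) + (x : ℕ) % (2 * r))
    (d : Fin n → ℤ) (h : ℤ) :
    (((β.support.sort (· ≤ ·)).map fun j : Fin n => A (j : ℕ) ^ d j).prod * B₀) ^
        (h * (orderOf β : ℤ)) =
      ((β.support.sort (· ≤ ·)).map fun j : Fin n =>
        A (j : ℕ) ^
          (h * ((orderOf β / (β.cycleOf j).support.card : ℕ) : ℤ) *
            ∑ j' ∈ (β.cycleOf j).support, d j')).prod := by
  have hR : 0 < 2 * r := by omega
  set a : Fin n → Equiv.Perm (Fin (2 * r * n)) := fun j => A (j : ℕ) with ha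
  have hblt : ∀ x : Fin (2 * r * n), (x : ℕ) / (2 * r) < n := by
    intro x
    exact Nat.div_lt_of_lt_mul x.isLt
  have hAval : ∀ (j : Fin n) (x : Fin (2 * r * n)), ((a j x : ℕ))
      = if (x : ℕ) / (2 * r) = (j : ℕ)
        then 2 * r * (j : ℕ) + ((x : ℕ) % (2 * r) + 1) % (2 * r) else (x : ℕ) :=
    fun j x => hA (j : ℕ) j.isLt x
  have hfix : ∀ (j : Fin n) (x : Fin (2 * r * n)), (x : ℕ) / (2 * r) ≠ (j : ℕ) → a j x = x := by
    intro j x hx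
    apply Fin.ext
    rw [hAval j x, if_neg hx]
  have hmove : ∀ (j : Fin n) (x : Fin (2 * r * n)), (x : ℕ) / (2 * r) = (j : ℕ) →
      ((a j x : ℕ)) = 2 * r * (j : ℕ) + ((x : ℕ) % (2 * r) + 1) % (2 * r) := by
    intro j x hx; rw [hAval j x, if_pos hx]
  have hdm : ∀ k m : ℕ, m < 2 * r →
      (2 * r * k + m) / (2 * r) = k ∧ (2 * r * k + m) % (2 * r) = m := by
    intro k m hm
    constructor
    · rw [Nat.mul_add_div hR, Nat.div_eq_of_lt hm, Nat.add_zero]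
    · rw [Nat.mul_add_mod, Nat.mod_eq_of_lt hm]
  have hmlt : ∀ x : Fin (2 * r * n), ((x : ℕ) % (2 * r) + 1) % (2 * r) < 2 * r :=
    fun x => Nat.mod_lt _ hR
  have hxlt : ∀ x : Fin (2 * r * n), (x : ℕ) % (2 * r) < 2 * r := fun x => Nat.mod_lt _ hR
  have hAdm : ∀ (j : Fin n) (x : Fin (2 * r * n)), (x : ℕ) / (2 * r) = (j : ℕ) →
      ((a j x : ℕ)) / (2 * r) = (j : ℕ)
        ∧ ((a j x : ℕ)) % (2 * r) = ((x : ℕ) % (2 * r) + 1) % (2 * r) := by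
    intro j x hx
    rw [hmove j x hx]
    exact hdm _ _ (hmlt x)
  have hcomm : ∀ i j : Fin n, Commute (a i) (a j) := by
    intro i j
    rcases eq_or_ne i j with rfl | hij
    · exact Commute.refl _
    · have hij' : (i : ℕ) ≠ (j : ℕ) := fun hh => hij (Fin.ext hh)
      show a i * a j = a j * a i
      apply Equiv.ext
      intro x
      simp only [Equiv.Perm.mul_apply]
      by_cases h1 : (x : ℕ) / (2 * r) = (i : ℕ)
      · have h2 : (x : ℕ) / (2 * r) ≠ (j : ℕ) := fun hh => hij' (h1.symm.trans hh)
        rw [hfix j x h2]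
        exact (hfix j (a i x) (by rw [(hAdm i x h1).1]; exact hij')).symm
      · by_cases h2 : (x : ℕ) / (2 * r) = (j : ℕ)
        · rw [hfix i x h1]
          exact hfix i (a j x) (by rw [(hAdm j x h2).1]; exact fun hh => hij' hh.symm)
        · rw [hfix j x h2, hfix i x h1, hfix j x h2]
  have hBval : ∀ x : Fin (2 * r * n),
      ((B₀ x : ℕ)) = 2 * r * ((β ⟨(x : ℕ) / (2 * r), hblt x⟩ : ℕ)) + (x : ℕ) % (2 * r) :=
    fun x => hβ x ⟨_, hblt x⟩ rfl
  have hBdm : ∀ x : Fin (2 * r * n), ((B₀ x : ℕ)) / (2 * r) = ((β ⟨(x : ℕ) / (2 * r), hblt x⟩ : ℕ))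
      ∧ ((B₀ x : ℕ)) % (2 * r) = (x : ℕ) % (2 * r) := by
    intro x; rw [hBval x]; exact hdm _ _ (hxlt x)
  have hconj : ∀ j : Fin n, B₀ * a j = a (β j) * B₀ := by
    intro j
    apply Equiv.ext; intro x
    simp only [Equiv.Perm.mul_apply]
    apply Fin.ext
    by_cases h1 : (x : ℕ) / (2 * r) = (j : ℕ)
    · have hbF : (⟨(x : ℕ) / (2 * r), hblt x⟩ : Fin n) = j := Fin.ext h1
      have hL : ((B₀ (a j x) : ℕ)) = 2 * r * ((β j : ℕ)) + ((x : ℕ) % (2 * r) + 1) % (2 * r) := by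
        rw [hβ (a j x) j (hAdm j x h1).1, (hAdm j x h1).2]
      have hRr : ((a (β j) (B₀ x) : ℕ))
          = 2 * r * ((β j : ℕ)) + ((x : ℕ) % (2 * r) + 1) % (2 * r) := by
        have hbb : ((B₀ x : ℕ)) / (2 * r) = ((β j : ℕ)) := by rw [(hBdm x).1, hbF]
        rw [hmove (β j) (B₀ x) hbb, (hBdm x).2]
      rw [hL, hRr]
    · have hne : (⟨(x : ℕ) / (2 * r), hblt x⟩ : Fin n) ≠ j := fun hh => h1 (congrArg Fin.val hh)
      have hL : a j x = x := hfix j x h1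
      have hRr : a (β j) (B₀ x) = B₀ x := by
        apply hfix (β j) (B₀ x)
        rw [(hBdm x).1]
        exact fun hh => hne (β.injective (Fin.ext hh))
      rw [hL, hRr]
  have hBpow : ∀ (k : ℕ) (x : Fin (2 * r * n)),
      (((B₀ ^ k) x : ℕ))
        = 2 * r * (((β ^ k) ⟨(x : ℕ) / (2 * r), hblt x⟩ : ℕ)) + (x : ℕ) % (2 * r) := by
    intro k
    induction k with
    | zero =>
      intro x
      simp only [pow_zero, Equiv.Perm.one_apply]
      exact (Nat.div_add_mod (x : ℕ) (2 * r)).symm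
    | succ k ih =>
      intro x
      rw [pow_succ, Equiv.Perm.mul_apply, ih (B₀ x)]
      have hb2 : (⟨((B₀ x : ℕ)) / (2 * r), hblt (B₀ x)⟩ : Fin n)
          = β ⟨(x : ℕ) / (2 * r), hblt x⟩ := Fin.ext (hBdm x).1
      rw [hb2, (hBdm x).2]
      have hb3 : (β ^ (k + 1)) ⟨(x : ℕ) / (2 * r), hblt x⟩
          = (β ^ k) (β ⟨(x : ℕ) / (2 * r), hblt x⟩) := by
        rw [pow_succ, Equiv.Perm.mul_apply]
      rw [hb3]
  have hBN : B₀ ^ orderOf β = 1 := by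
    apply Equiv.ext; intro x
    apply Fin.ext
    rw [hBpow (orderOf β) x, pow_orderOf_eq_one β]
    simp only [Equiv.Perm.one_apply]
    exact Nat.div_add_mod (x : ℕ) (2 * r)
  set u : Fin n → ℤ := fun j => if j ∈ β.support then d j else 0 with hu
  set e : Fin n → ℤ := fun j => if j ∈ β.support
    then h * ((orderOf β / (β.cycleOf j).support.card : ℕ) : ℤ)
      * ∑ j' ∈ (β.cycleOf j).support, d j'
    else 0 with he
  have hLlist : ((β.support.sort (· ≤ ·)).map fun j : Fin n => A (j : ℕ) ^ d j)
      = ((β.support.sort (· ≤ ·)).map fun j : Fin n => a j ^ u j) := by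
    apply List.map_congr_left
    intro j hj
    rw [Finset.mem_sort] at hj
    simp only [ha, hu]
    rw [if_pos hj]
  have hRlist : ((β.support.sort (· ≤ ·)).map fun j : Fin n =>
        A (j : ℕ) ^
          (h * ((orderOf β / (β.cycleOf j).support.card : ℕ) : ℤ) *
            ∑ j' ∈ (β.cycleOf j).support, d j'))
      = ((β.support.sort (· ≤ ·)).map fun j : Fin n => a j ^ e j) := by
    apply List.map_congr_left
    intro j hj
    rw [Finset.mem_sort] at hj
    simp only [ha, he]
    rw [if_pos hj]
  rw [hLlist, hRlist,
    s17list_fprod a hcomm β.support u (fun j hj => by simp only [hu]; rw [if_neg hj]),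
    s17list_fprod a hcomm β.support e (fun j hj => by simp only [he]; rw [if_neg hj])]
  have hmain := s17main_pow a hcomm B₀ β hconj u (orderOf β)
  rw [hBN, mul_one] at hmain
  have hzp : (s17fprod a hcomm u * B₀) ^ (h * (orderOf β : ℤ))
      = ((s17fprod a hcomm u * B₀) ^ orderOf β) ^ h := by
    rw [mul_comm h ((orderOf β : ℤ)), zpow_mul, zpow_natCast]
  rw [hzp, hmain, s17fprod_zpow]
  apply congrArg
  funext j
  simp only [Pi.smul_apply, smul_eq_mul]
  have hw : ∀ t : ℕ, (β ^ t)⁻¹ j = (β⁻¹ ^ t) j := fun t => by rw [inv_pow]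
  by_cases hj : j ∈ β.support
  · have hj' : j ∈ β⁻¹.support := by rwa [Equiv.Perm.support_inv]
    have hβN : β⁻¹ ^ orderOf β = 1 := by
      rw [inv_pow, pow_orderOf_eq_one, inv_one]
    have hcy : β⁻¹.IsCycleOn ((β.cycleOf j).support : Set (Fin n)) :=
      (β.isCycleOn_support_cycleOf j).inv
    have hjs : j ∈ (β.cycleOf j).support :=
      Equiv.Perm.mem_support_cycleOf_iff.2 ⟨Equiv.Perm.SameCycle.refl _ _, hj⟩
    have hks := s17key_sum β⁻¹ u j (β.cycleOf j).support hcy hjs hβN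
    have hsum : ∑ t ∈ Finset.range (orderOf β), u ((β ^ t)⁻¹ j)
        = ∑ t ∈ Finset.range (orderOf β), u ((β⁻¹ ^ t) j) :=
      Finset.sum_congr rfl (fun t _ => by rw [hw t])
    rw [hsum, hks]
    have hud : ∑ j' ∈ (β.cycleOf j).support, u j' = ∑ j' ∈ (β.cycleOf j).support, d j' :=
      Finset.sum_congr rfl (fun j' hjj => by
        have hmem : j' ∈ β.support := Equiv.Perm.support_cycleOf_le β j hjj
        simp only [hu]
        rw [if_pos hmem])
    rw [hud]
    simp only [he, if_pos hj]
    ring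
  · have hfixj : β⁻¹ j = j := by
      have hb : β j = j := Equiv.Perm.notMem_support.1 hj
      apply β.injective
      rw [← Equiv.Perm.mul_apply, mul_inv_cancel, Equiv.Perm.one_apply, hb]
    have hfa : ∀ t : ℕ, (β ^ t)⁻¹ j = j := fun t => by
      rw [hw t]; exact Equiv.Perm.pow_apply_eq_self_of_apply_eq_self hfixj t
    simp only [hfa, hu, he, if_neg hj]
    simp
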